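/- Let q be a prime power, s ≥ 1, and let C^(1), ..., C^(s) ∈ F_q^{ℕ×ℕ₀} be finite-row generating matrices whose digital sequence (via the digital method with index sequence s_n = n) is uniformly distributed in [0,1]^s. Let (s_n)_{n≥0} be a uniformly distributed sequence in Z_q. Then the sequence (x_n)_{n≥0} in [0,1]^s produced by the digital method applied to the q-adic digits of s_n is uniformly distributed in [0,1]^s. -/

import Mathlib

open Filter Finset


def Zb (b : ℕ) : Subring (∀ k : ℕ, ZMod (b ^ k)) where
  carrier := {x | ∀ k, ZMod.castHom (pow_dvd_pow b (Nat.le_succ k)) (ZMod (b ^ k)) (x (k + 1)) = x k}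
  zero_mem' := fun k => map_zero _
  one_mem' := fun k => map_one _
  add_mem' := fun hx hy k => by rw [Pi.add_apply, map_add, hx k, hy k]; rfl
  mul_mem' := fun hx hy k => by rw [Pi.mul_apply, map_mul, hx k, hy k]; rfl
  neg_mem' := fun hx k => by rw [Pi.neg_apply, map_neg, hx k]; rfl

def natToZb (b : ℕ) (n : ℕ) : ↥(Zb b) := ⟨fun k => (n : ZMod (b ^ k)), fun k => map_natCast _ n⟩

def UDZb (b : ℕ) (x : ℕ → ↥(Zb b)) : Prop :=
  ∀ k : ℕ, 1 ≤ k → ∀ a : ZMod (b ^ k),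
    Filter.Tendsto
      (fun N => (((Finset.range N).filter (fun n => (x n).1 k = a)).card : ℝ) / N)
      Filter.atTop (nhds (1 / (b : ℝ) ^ k))

/-- The `r`-th `b`-adic digit of a `q`-adic integer `x`, as an element of `Fin q`. -/
def zbDigitF (q : ℕ) (hq : 0 < q) (x : ↥(Zb q)) (r : ℕ) : Fin q :=
  ⟨(x.1 (r + 1)).val / q ^ r % q, Nat.mod_lt _ hq⟩

/-- The `i`-th coordinate of the point produced by the digital method (Algorithm 2) from the
`q`-adic digits of `x`, using generating matrices `c` (rows indexed from `1`), bijections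
`ψ r : {0,…,q-1} → F_q` and `Λ i j : F_q → {0,…,q-1}`. -/
noncomputable def digPoint {F : Type} [Field F] (q : ℕ) (hq : 0 < q) (s : ℕ)
    (c : Fin s → ℕ → ℕ → F) (ψ : ℕ → Fin q ≃ F) (Λ : Fin s → ℕ → F ≃ Fin q)
    (x : ↥(Zb q)) (i : Fin s) : ℝ :=
  ∑' j : ℕ,
    (((Λ i (j + 1)) (∑ᶠ r : ℕ, c i (j + 1) r * ψ r (zbDigitF q hq x r)) : Fin q) : ℝ)
      / (q : ℝ) ^ (j + 1)

open Classical in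
/-- Uniform distribution in the cube, tested on elementary `q`-adic intervals: every interval
`Π_i [a_i/q^{d_i}, (a_i+1)/q^{d_i})` receives its fair asymptotic proportion of points. -/
def UDCube (q s : ℕ) (x : ℕ → Fin s → ℝ) : Prop :=
  ∀ d : Fin s → ℕ, ∀ a : Fin s → ℕ, (∀ i, a i < q ^ d i) →
    Filter.Tendsto
      (fun N => (((Finset.range N).filter
        (fun n => ∀ i, (a i : ℝ) / (q : ℝ) ^ d i ≤ x n i
          ∧ x n i < ((a i : ℝ) + 1) / (q : ℝ) ^ d i)).card : ℝ) / N)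
      Filter.atTop (nhds (∏ i, 1 / (q : ℝ) ^ d i))


-- A: nat geometric identity
lemma geomNat (q D : ℕ) (hq : 1 ≤ q) : (q - 1) * ∑ t ∈ Finset.range D, q ^ t + 1 = q ^ D := by
  induction D with
  | zero => simp
  | succ n ih =>
    rw [Finset.sum_range_succ, Nat.mul_add, pow_succ]
    obtain ⟨p, rfl⟩ : ∃ p, q = p + 1 := ⟨q - 1, by omega⟩
    simp only [Nat.add_sub_cancel] at ih ⊢
    rw [Nat.mul_add]
    calc p * ∑ t ∈ Finset.range n, (p+1) ^ t + p * (p+1) ^ n + 1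
        = (p * ∑ t ∈ Finset.range n, (p+1) ^ t + 1) + p * (p+1)^n := by ring
      _ = (p+1)^n + p * (p+1)^n := by rw [ih]
      _ = (p+1)^n * p + (p+1)^n * 1 := by ring

-- B: arithmetic progression counting bounds
lemma apCount_lb (M r N : ℕ) (hM : 0 < M) (hr : r < M) :
    N / M ≤ ((Finset.range N).filter (fun n => n % M = r)).card := by
  have : (Finset.range (N / M)).image (fun j => r + j * M) ⊆
      (Finset.range N).filter (fun n => n % M = r) := by
    intro x hx
    simp only [Finset.mem_image, Finset.mem_range] at hx
    obtain ⟨j, hj, rfl⟩ := hx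
    have h1 : (j + 1) * M ≤ N := (Nat.le_div_iff_mul_le hM).mp hj
    simp only [Finset.mem_filter, Finset.mem_range]
    constructor
    · calc r + j * M < M + j * M := by omega
        _ = (j+1) * M := by ring
        _ ≤ N := h1
    · simp [Nat.add_mul_mod_self_right, Nat.mod_eq_of_lt hr]
  calc N / M = (Finset.range (N/M)).card := by simp
    _ = ((Finset.range (N / M)).image (fun j => r + j * M)).card := by
        rw [Finset.card_image_of_injective]
        intro a b hab
        simpa [Nat.add_right_cancel_iff, Nat.mul_left_inj (by omega : M ≠ 0)] using hab
    _ ≤ _ := Finset.card_le_card this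

lemma apCount_ub (M r N : ℕ) (hM : 0 < M) :
    ((Finset.range N).filter (fun n => n % M = r)).card ≤ N / M + 1 := by
  have : (Finset.range N).filter (fun n => n % M = r) ⊆
      (Finset.range (N / M + 1)).image (fun j => r + j * M) := by
    intro n hn
    simp only [Finset.mem_filter, Finset.mem_range] at hn
    obtain ⟨hnN, hnr⟩ := hn
    refine Finset.mem_image.mpr ⟨n / M, ?_, ?_⟩
    · simp only [Finset.mem_range]
      exact Nat.lt_succ_of_le (Nat.div_le_div_right hnN.le)
    · conv_rhs => rw [← Nat.mod_add_div n M]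
      rw [hnr]; ring
  calc _ ≤ _ := Finset.card_le_card this
    _ ≤ (Finset.range (N/M+1)).card := Finset.card_image_le
    _ = N / M + 1 := by simp

lemma apCount (M r : ℕ) (hM : 1 < M) (hr : r < M) :
    Tendsto (fun N => (((Finset.range N).filter (fun n => n % M = r)).card : ℝ) / N) atTop
      (nhds (1 / M)) := by
  have hM0 : (0:ℝ) < M := by positivity
  have hlo : Tendsto (fun N : ℕ => 1/(M:ℝ) - 1/N) atTop (nhds (1/M)) := by
    simpa using (tendsto_const_nhds (x := 1/(M:ℝ))).sub tendsto_one_div_atTop_nhds_zero_nat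
  have hhi : Tendsto (fun N : ℕ => 1/(M:ℝ) + 2/N) atTop (nhds (1/M)) := by
    have : Tendsto (fun N : ℕ => 2/(N:ℝ)) atTop (nhds 0) := by
      simpa [div_eq_mul_inv] using tendsto_one_div_atTop_nhds_zero_nat.const_mul (2:ℝ)
    simpa using (tendsto_const_nhds (x := 1/(M:ℝ))).add this
  refine tendsto_of_tendsto_of_tendsto_of_le_of_le' hlo hhi ?_ ?_
  · filter_upwards [eventually_gt_atTop 0] with N hN
    have hN0 : (0:ℝ) < N := by positivity
    have h1 : (N:ℝ)/M - 1 ≤ ((N / M : ℕ) : ℝ) := by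
      have h2 : N < M * (N / M) + M := by
        have := Nat.div_add_mod N M
        have := Nat.mod_lt N (show 0 < M by omega)
        omega
      have h3 : (N:ℝ) < M * ((N / M : ℕ) : ℝ) + M := by exact_mod_cast h2
      rw [sub_le_iff_le_add, div_le_iff₀ hM0]
      nlinarith
    have h4 : ((N / M : ℕ) : ℝ) ≤ (((Finset.range N).filter (fun n => n % M = r)).card : ℝ) := by
      exact_mod_cast apCount_lb M r N (by omega) hr
    rw [le_div_iff₀ hN0]
    have he : (1/(M:ℝ) - 1/N) * N = N/M - 1 := by field_simp
    rw [he]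
    linarith
  · filter_upwards [eventually_gt_atTop 0] with N hN
    have hN0 : (0:ℝ) < N := by positivity
    have h4 : (((Finset.range N).filter (fun n => n % M = r)).card : ℝ) ≤ ((N / M : ℕ) : ℝ) + 1 := by
      exact_mod_cast apCount_ub M r N (by omega)
    have h5 : ((N / M : ℕ) : ℝ) ≤ (N:ℝ)/M := Nat.cast_div_le
    rw [div_le_iff₀ hN0]
    have he : (1/(M:ℝ) + 2/N) * N = N/M + 2 := by field_simp
    rw [he]
    linarith

lemma udzb_nat (q : ℕ) (hq : 1 < q) : UDZb q (natToZb q) := by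
  intro k hk a
  have hM : 1 < q ^ k := Nat.one_lt_pow (by omega) hq
  haveI : NeZero (q ^ k) := ⟨by omega⟩
  have hpred : ∀ n : ℕ, ((natToZb q n).1 k = a) ↔ (n % q ^ k = a.val) := by
    intro n
    constructor
    · intro h
      have : ((n : ZMod (q^k))).val = a.val := by rw [← h]; rfl
      rwa [ZMod.val_natCast] at this
    · intro h
      show (n : ZMod (q^k)) = a
      rw [← ZMod.natCast_mod, h, ZMod.natCast_val, ZMod.cast_id]
  have hsets : ∀ N, (Finset.range N).filter (fun n => (natToZb q n).1 k = a)
      = (Finset.range N).filter (fun n => n % q ^ k = a.val) := by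
    intro N; ext n; simp [hpred n]
  have h := apCount (q^k) a.val hM (ZMod.val_lt a)
  have hcast : (1:ℝ)/((q^k : ℕ):ℝ) = 1/(q:ℝ)^k := by push_cast; ring
  rw [hcast] at h
  exact h.congr fun N => by rw [← hsets N]

lemma count_pred (q : ℕ) (hq : 1 < q) (x : ℕ → ↥(Zb q)) (hud : UDZb q x) (K : ℕ) (hK : 1 ≤ K)
    [NeZero (q ^ K)] (P : ZMod (q ^ K) → Prop) [DecidablePred P] :
    Tendsto (fun N => (((Finset.range N).filter (fun n => P ((x n).1 K))).card : ℝ) / N) atTop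
      (nhds ((((Finset.univ.filter P).card : ℝ)) / (q : ℝ) ^ K)) := by
  have keyN : ∀ N, ((Finset.range N).filter (fun n => P ((x n).1 K))).card
      = ∑ ρ ∈ Finset.univ.filter P, ((Finset.range N).filter (fun n => (x n).1 K = ρ)).card := by
    intro N
    simp_rw [Finset.card_filter]
    rw [Finset.sum_comm]
    refine Finset.sum_congr rfl fun n _ => ?_
    simp [Finset.sum_ite_eq, Finset.sum_ite_eq', Finset.mem_filter]
  have h2 := tendsto_finset_sum (Finset.univ.filter P) (fun ρ (_ : ρ ∈ Finset.univ.filter P) => hud K hK ρ)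
  have h3 : (∑ _ρ ∈ Finset.univ.filter P, 1/(q:ℝ)^K) = ((Finset.univ.filter P).card : ℝ) / (q:ℝ)^K := by
    rw [Finset.sum_const, nsmul_eq_mul, mul_one_div]
  rw [h3] at h2
  exact h2.congr fun N => by rw [← Finset.sum_div, ← Nat.cast_sum, ← keyN N]

lemma zb_val_mod (q : ℕ) (hq : 1 < q) (x : ↥(Zb q)) {k l : ℕ} (h : k ≤ l) :
    (x.1 k).val = (x.1 l).val % q ^ k := by
  haveI : ∀ m : ℕ, NeZero (q ^ m) := fun m => ⟨by positivity⟩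
  induction l, h using Nat.le_induction with
  | base => exact (Nat.mod_eq_of_lt (ZMod.val_lt _)).symm
  | succ l hkl ih =>
    have hstep : (x.1 l).val = (x.1 (l+1)).val % q ^ l := by
      have h := x.2 l
      rw [ZMod.castHom_apply, ← ZMod.natCast_val] at h
      rw [← h, ZMod.val_natCast]
    rw [ih, hstep, Nat.mod_mod_of_dvd _ (pow_dvd_pow q hkl)]

-- digits are determined by the K-th component
lemma zbDigit_eq (q : ℕ) (hq0 : 0 < q) (hq : 1 < q) (x : ↥(Zb q)) {r K : ℕ} (h : r + 1 ≤ K) :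
    zbDigitF q hq0 x r = zbDigitF q hq0 (natToZb q ((x.1 K).val)) r := by
  haveI : ∀ m : ℕ, NeZero (q ^ m) := fun m => ⟨by positivity⟩
  have h1 : (x.1 (r+1)).val = (x.1 K).val % q ^ (r+1) := zb_val_mod q hq x h
  have h2 : ((natToZb q ((x.1 K).val)).1 (r+1)).val = (x.1 K).val % q ^ (r+1) :=
    ZMod.val_natCast _ _
  unfold zbDigitF
  rw [Fin.mk.injEq, h1, h2]

section Dig

variable {F : Type} [Field F] (q : ℕ) (hq0 : 0 < q) (s : ℕ)
    (c : Fin s → ℕ → ℕ → F) (ψ : ℕ → Fin q ≃ F) (Λ : Fin s → ℕ → F ≃ Fin q)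

noncomputable def ydig (x : ↥(Zb q)) (i : Fin s) (j : ℕ) : ℕ :=
  ((Λ i (j + 1)) (∑ᶠ r : ℕ, c i (j + 1) r * ψ r (zbDigitF q hq0 x r)) : Fin q).val

lemma digPoint_eq (x : ↥(Zb q)) (i : Fin s) :
    digPoint q hq0 s c ψ Λ x i = ∑' j : ℕ, (ydig q hq0 s c ψ Λ x i j : ℝ) / q ^ (j + 1) := rfl

lemma ydig_lt (x : ↥(Zb q)) (i : Fin s) (j : ℕ) : ydig q hq0 s c ψ Λ x i j < q :=
  Fin.is_lt _

variable (hq1 : 1 < q)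
include hq1

lemma summable_ydig (x : ↥(Zb q)) (i : Fin s) :
    Summable (fun j => (ydig q hq0 s c ψ Λ x i j : ℝ) / q ^ (j + 1)) := by
  have hq0' : (0:ℝ) < q := by positivity
  refine Summable.of_nonneg_of_le (fun j => by positivity) (fun j => ?_)
    (summable_geometric_of_lt_one (r := 1/(q:ℝ)) (by positivity) ?_)
  · have h1 : (ydig q hq0 s c ψ Λ x i j : ℝ) ≤ q := by
      exact_mod_cast (ydig_lt q hq0 s c ψ Λ x i j).le
    rw [div_le_iff₀ (by positivity), one_div, inv_pow, inv_mul_eq_div,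
      le_div_iff₀ (by positivity)]
    calc (ydig q hq0 s c ψ Λ x i j : ℝ) * (q:ℝ)^j ≤ q * (q:ℝ)^j := by
          apply mul_le_mul_of_nonneg_right h1 (by positivity)
      _ = q^(j+1) := by ring
  · rw [div_lt_iff₀ hq0']; simpa using by exact_mod_cast hq1

noncomputable def mfun (D : ℕ) (x : ↥(Zb q)) (i : Fin s) : ℕ :=
  ∑ j ∈ Finset.range D, ydig q hq0 s c ψ Λ x i j * q ^ (D - 1 - j)

omit hq1 in
lemma mfun_zero (x : ↥(Zb q)) (i : Fin s) : mfun q hq0 s c ψ Λ 0 x i = 0 := by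
  simp [mfun]

lemma mfun_lt (D : ℕ) (x : ↥(Zb q)) (i : Fin s) : mfun q hq0 s c ψ Λ D x i < q ^ D := by
  have h1 : mfun q hq0 s c ψ Λ D x i ≤ (q-1) * ∑ j ∈ Finset.range D, q ^ j := by
    rw [Finset.mul_sum, ← Finset.sum_range_reflect (fun j => (q-1) * q ^ j) D]
    refine Finset.sum_le_sum fun j hj => ?_
    exact Nat.mul_le_mul_right _ (by have := ydig_lt q hq0 s c ψ Λ x i j; omega)
  have h2 := geomNat q D (by omega)
  omega

lemma partial_eq (D : ℕ) (x : ↥(Zb q)) (i : Fin s) :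
    ∑ j ∈ Finset.range D, (ydig q hq0 s c ψ Λ x i j : ℝ) / q ^ (j + 1)
      = (mfun q hq0 s c ψ Λ D x i : ℝ) / q ^ D := by
  unfold mfun
  push_cast
  rw [Finset.sum_div]
  refine Finset.sum_congr rfl fun j hj => ?_
  rw [Finset.mem_range] at hj
  have hpow : (q:ℝ)^(D-1-j) * q^(j+1) = q^D := by
    rw [← pow_add]; congr 1; omega
  rw [div_eq_div_iff (by positivity) (by positivity), mul_assoc, hpow]

set_option maxHeartbeats 1000000 in
lemma point_sandwich (D : ℕ) (x : ↥(Zb q)) (i : Fin s) :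
    (mfun q hq0 s c ψ Λ D x i : ℝ) / q ^ D ≤ digPoint q hq0 s c ψ Λ x i ∧
    digPoint q hq0 s c ψ Λ x i ≤ ((mfun q hq0 s c ψ Λ D x i : ℝ) + 1) / q ^ D := by
  have hq0' : (0:ℝ) < q := by positivity
  have hsum := summable_ydig q hq0 s c ψ Λ hq1 x i
  have hsplit := Summable.sum_add_tsum_nat_add D hsum
  rw [digPoint_eq, ← hsplit, partial_eq q hq0 s c ψ Λ hq1 D x i]
  have htail0 : 0 ≤ ∑' j, (ydig q hq0 s c ψ Λ x i (j + D) : ℝ) / q ^ (j + D + 1) :=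
    tsum_nonneg fun j => by positivity
  have hgs : Summable (fun j : ℕ => ((q:ℝ)-1) / q ^ (D+1) * (1/(q:ℝ)) ^ j) := by
    apply Summable.mul_left
    refine summable_geometric_of_lt_one (by positivity) ?_
    rw [div_lt_iff₀ hq0']; simpa using by exact_mod_cast hq1
  have htail1 : (∑' j, (ydig q hq0 s c ψ Λ x i (j + D) : ℝ) / q ^ (j + D + 1)) ≤ 1 / q ^ D := by
    have hb : ∀ j : ℕ, (ydig q hq0 s c ψ Λ x i (j + D) : ℝ) / q ^ (j + D + 1)
        ≤ ((q:ℝ)-1) / q ^ (D+1) * (1/(q:ℝ)) ^ j := by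
      intro j
      have h1 : (ydig q hq0 s c ψ Λ x i (j+D) : ℝ) ≤ (q:ℝ) - 1 := by
        have := ydig_lt q hq0 s c ψ Λ x i (j+D)
        have : (ydig q hq0 s c ψ Λ x i (j+D) : ℝ) + 1 ≤ q := by exact_mod_cast this
        linarith
      have hrw : ((q:ℝ)-1) / q ^ (D+1) * (1/(q:ℝ)) ^ j = ((q:ℝ)-1) / q ^ (j + D + 1) := by
        rw [one_div, inv_pow, mul_comm, inv_mul_eq_div, div_div, ← pow_add]
        congr 2
        omega
      rw [hrw]
      gcongr
    calc (∑' j, (ydig q hq0 s c ψ Λ x i (j + D) : ℝ) / q ^ (j + D + 1))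
        ≤ ∑' j : ℕ, ((q:ℝ)-1) / q ^ (D+1) * (1/(q:ℝ)) ^ j := by
          exact Summable.tsum_le_tsum hb ((summable_nat_add_iff D).2 hsum) hgs
      _ = ((q:ℝ)-1) / q ^ (D+1) * (1 - 1/(q:ℝ))⁻¹ := by
          rw [tsum_mul_left, tsum_geometric_of_lt_one (by positivity) (by
            rw [div_lt_iff₀ hq0']; simpa using by exact_mod_cast hq1)]
      _ = 1 / q ^ D := by
          have hA : (1 - 1/(q:ℝ)) = ((q:ℝ)-1)/q := by field_simp
          rw [hA, inv_div, div_mul_div_comm, pow_succ]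
          have hq1'' : (1:ℝ) < (q:ℝ) := by exact_mod_cast hq1
          have h3 : (0:ℝ) < (q:ℝ)^D := by positivity
          have hd1 : ((q:ℝ)^D * (q:ℝ) * ((q:ℝ) - 1)) ≠ 0 :=
            ne_of_gt (mul_pos (mul_pos h3 hq0') (by linarith))
          have hd2 : (q:ℝ)^D ≠ 0 := ne_of_gt h3
          rw [div_eq_div_iff hd1 hd2]
          ring
  constructor
  · linarith
  · rw [add_div]; linarith

omit hq1 in
lemma ydig_congr (K : ℕ) (x y : ↥(Zb q))
    (hxy : ∀ r, r + 1 ≤ K → zbDigitF q hq0 x r = zbDigitF q hq0 y r)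
    (i : Fin s) (j : ℕ) (hc : ∀ r, K ≤ r → c i (j+1) r = 0) :
    ydig q hq0 s c ψ Λ x i j = ydig q hq0 s c ψ Λ y i j := by
  unfold ydig
  congr 2
  apply finsum_congr
  intro r
  rcases le_or_gt K r with h | h
  · rw [hc r h, zero_mul, zero_mul]
  · rw [hxy r (by omega)]

end Dig

section Dig2

variable {F : Type} [Field F] (q : ℕ) (hq0 : 0 < q) (s : ℕ)
    (c : Fin s → ℕ → ℕ → F) (ψ : ℕ → Fin q ≃ F) (Λ : Fin s → ℕ → F ≃ Fin q)

lemma mfun_stable (hq1 : 1 < q) (K : ℕ) (i : Fin s) (Di : ℕ)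
    (hc : ∀ j, j < Di → ∀ r, K ≤ r → c i (j+1) r = 0) (x : ↥(Zb q)) :
    mfun q hq0 s c ψ Λ Di x i = mfun q hq0 s c ψ Λ Di (natToZb q ((x.1 K).val)) i := by
  unfold mfun
  refine Finset.sum_congr rfl fun j hj => ?_
  rw [Finset.mem_range] at hj
  congr 1
  exact ydig_congr q hq0 s c ψ Λ K x (natToZb q ((x.1 K).val))
    (fun r hr => zbDigit_eq q hq0 hq1 x hr) i j (hc j hj)

end Dig2

lemma count_mono {p1 p2 : ℕ → Prop} [DecidablePred p1] [DecidablePred p2]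
    (h : ∀ n, p1 n → p2 n) (N : ℕ) :
    ((Finset.filter p1 (Finset.range N)).card : ℝ)/N ≤ ((Finset.filter p2 (Finset.range N)).card : ℝ)/N := by
  rcases Nat.eq_zero_or_pos N with rfl | hN
  · simp
  · rw [div_le_div_iff_of_pos_right (by positivity : (0:ℝ) < N)]
    have : Finset.filter p1 (Finset.range N) ⊆ Finset.filter p2 (Finset.range N) := fun x hx => by
      simp only [Finset.mem_filter] at *
      exact ⟨hx.1, h _ hx.2⟩
    exact_mod_cast Finset.card_le_card this

lemma count_split {p pa pb pc : ℕ → Prop} [DecidablePred p] [DecidablePred pa]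
    [DecidablePred pb] [DecidablePred pc]
    (h : ∀ n, p n → pa n ∨ pb n ∨ ¬ pc n) (N : ℕ) :
    ((Finset.filter p (Finset.range N)).card : ℝ)/N ≤
      ((Finset.filter pa (Finset.range N)).card : ℝ)/N
      + ((Finset.filter pb (Finset.range N)).card : ℝ)/N
      + (1 - ((Finset.filter pc (Finset.range N)).card : ℝ)/N) := by
  rcases Nat.eq_zero_or_pos N with rfl | hN
  · simp
  have hnat : (Finset.filter p (Finset.range N)).card ≤
      (Finset.filter pa (Finset.range N)).card + (Finset.filter pb (Finset.range N)).card
        + (N - (Finset.filter pc (Finset.range N)).card) := by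
    have hsub : Finset.filter p (Finset.range N) ⊆
        (Finset.filter pa (Finset.range N) ∪ Finset.filter pb (Finset.range N))
          ∪ (Finset.range N \ Finset.filter pc (Finset.range N)) := by
      intro n hn
      simp only [Finset.mem_filter, Finset.mem_union, Finset.mem_sdiff, Finset.mem_range] at *
      obtain ⟨hnN, hp⟩ := hn
      rcases h n hp with h1 | h1 | h1
      · exact Or.inl (Or.inl ⟨hnN, h1⟩)
      · exact Or.inl (Or.inr ⟨hnN, h1⟩)
      · exact Or.inr ⟨hnN, fun hc => h1 hc.2⟩
    have h1 := Finset.card_le_card hsub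
    have h2 := Finset.card_union_le (Finset.filter pa (Finset.range N) ∪ Finset.filter pb (Finset.range N))
      (Finset.range N \ Finset.filter pc (Finset.range N))
    have h3 := Finset.card_union_le (Finset.filter pa (Finset.range N)) (Finset.filter pb (Finset.range N))
    have h4 : (Finset.range N \ Finset.filter pc (Finset.range N)).card
        = N - (Finset.filter pc (Finset.range N)).card := by
      rw [Finset.card_sdiff_of_subset (Finset.filter_subset _ _), Finset.card_range]
    omega
  have hNR : (0:ℝ) < N := by positivity
  have hcle : (Finset.filter pc (Finset.range N)).card ≤ N := by
    calc _ ≤ (Finset.range N).card := Finset.card_le_card (Finset.filter_subset _ _)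
      _ = N := Finset.card_range N
  have hcast : ((Finset.filter p (Finset.range N)).card : ℝ) ≤
      ((Finset.filter pa (Finset.range N)).card : ℝ)
      + ((Finset.filter pb (Finset.range N)).card : ℝ)
      + ((N:ℝ) - ((Finset.filter pc (Finset.range N)).card : ℝ)) := by
    have := hnat
    have hsub' : ((N - (Finset.filter pc (Finset.range N)).card : ℕ) : ℝ)
        = (N:ℝ) - ((Finset.filter pc (Finset.range N)).card : ℝ) := by
      push_cast [Nat.cast_sub hcle]; ring
    calc ((Finset.filter p (Finset.range N)).card : ℝ)
        ≤ ((Finset.filter pa (Finset.range N)).card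
          + (Finset.filter pb (Finset.range N)).card
          + (N - (Finset.filter pc (Finset.range N)).card) : ℕ) := by exact_mod_cast hnat
      _ = _ := by push_cast [Nat.cast_sub hcle]; ring
  have heq : ((Finset.filter pa (Finset.range N)).card : ℝ)/N
      + ((Finset.filter pb (Finset.range N)).card : ℝ)/N
      + (1 - ((Finset.filter pc (Finset.range N)).card : ℝ)/N)
      = (((Finset.filter pa (Finset.range N)).card : ℝ)
        + ((Finset.filter pb (Finset.range N)).card : ℝ)
        + ((N:ℝ) - ((Finset.filter pc (Finset.range N)).card : ℝ)))/N := by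
    field_simp
  rw [heq, div_le_div_iff_of_pos_right hNR]
  exact hcast

set_option maxHeartbeats 2000000 in
/-- if the finite-row generating matrices produce (via the digital method with
index sequence `s_n = n`) a uniformly distributed sequence in `[0,1]^s`, and `(s_n)` is a
uniformly distributed sequence in `Z_q`, then the digital method applied to the `q`-adic
digits of `s_n` produces a uniformly distributed sequence in `[0,1]^s`. -/
theorem stmt_12 {F : Type} [Field F] [Fintype F] (q : ℕ) (hq : Fintype.card F = q)
    (hq0 : 0 < q) (s : ℕ) (hs : 1 ≤ s) (c : Fin s → ℕ → ℕ → F)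
    (hfin : ∀ i j, ∃ R : ℕ, ∀ r, R ≤ r → c i j r = 0)
    (ψ : ℕ → Fin q ≃ F) (Λ : Fin s → ℕ → F ≃ Fin q)
    (hudnat : UDCube q s (fun n => digPoint q hq0 s c ψ Λ (natToZb q n)))
    (sn : ℕ → ↥(Zb q)) (hsn : UDZb q sn) :
    UDCube q s (fun n => digPoint q hq0 s c ψ Λ (sn n)) := by
  classical
  have hq1 : 1 < q := hq ▸ Fintype.one_lt_card
  have hq1R : (1:ℝ) < q := by exact_mod_cast hq1
  have hq0R : (0:ℝ) < q := by linarith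
  intro d a ha
  rw [Metric.tendsto_nhds]
  intro ε hε
  -- choose the precision e
  obtain ⟨e, he⟩ : ∃ e : ℕ, (4*(s:ℝ))/(q:ℝ)^e < ε/2 := by
    obtain ⟨e, he⟩ := ((tendsto_pow_atTop_atTop_of_one_lt hq1R).eventually_gt_atTop
      (8*(s:ℝ)/ε)).exists
    refine ⟨e, ?_⟩
    have hqe : (0:ℝ) < (q:ℝ)^e := by positivity
    rw [div_lt_iff₀ hqe]
    rw [div_lt_iff₀ hε] at he
    linarith
  -- choose K
  choose Rf hRf using hfin
  set DD : Fin s → ℕ := fun i => d i + e with hDD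
  set K : ℕ := 1 + Finset.sup (Finset.univ ×ˢ Finset.range (Finset.univ.sup DD + 1))
    (fun p => Rf p.1 p.2) with hKdef
  have hK1 : 1 ≤ K := by rw [hKdef]; omega
  have hKrow : ∀ (i : Fin s), ∀ j < DD i, ∀ (r : ℕ), K ≤ r → c i (j+1) r = 0 := by
    intro i j hj r hr
    apply hRf
    have hmem : (i, j+1) ∈ Finset.univ ×ˢ Finset.range (Finset.univ.sup DD + 1) := by
      refine Finset.mem_product.mpr ⟨Finset.mem_univ _, Finset.mem_range.mpr ?_⟩
      have := Finset.le_sup (f := DD) (Finset.mem_univ i)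
      omega
    have h2 := Finset.le_sup (f := fun p : Fin s × ℕ => Rf p.1 p.2) hmem
    simp only at h2
    omega
  haveI : NeZero (q ^ K) := ⟨by positivity⟩
  set g : ZMod (q ^ K) → Fin s → ℕ :=
    fun ρ i => mfun q hq0 s c ψ Λ (DD i) (natToZb q ρ.val) i with hgdef
  have hg : ∀ (x : ↥(Zb q)) (i : Fin s),
      mfun q hq0 s c ψ Λ (DD i) x i = g (x.1 K) i :=
    fun x i => mfun_stable q hq0 s c ψ Λ hq1 K i (DD i) (hKrow i) x
  have hglt : ∀ (ρ : ZMod (q^K)) (i : Fin s), g ρ i < q ^ DD i :=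
    fun ρ i => mfun_lt q hq0 s c ψ Λ hq1 (DD i) _ i
  have hS : ∀ (x : ↥(Zb q)) (i : Fin s),
      (g (x.1 K) i : ℝ)/(q:ℝ)^(DD i) ≤ digPoint q hq0 s c ψ Λ x i ∧
      digPoint q hq0 s c ψ Λ x i ≤ ((g (x.1 K) i : ℝ)+1)/(q:ℝ)^(DD i) := by
    intro x i
    have h := point_sandwich q hq0 s c ψ Λ hq1 (DD i) x i
    rw [hg x i] at h
    exact h
  have hqDpos : ∀ i : Fin s, (0:ℝ) < (q:ℝ)^(DD i) := fun i => by positivity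
  have hpow : ∀ i : Fin s, (q:ℝ)^(DD i) = (q:ℝ)^(d i) * (q:ℝ)^e := fun i => pow_add _ _ _
  -- pointwise implications
  have himp1 : ∀ x : ↥(Zb q),
      (∀ i, a i * q^e ≤ g (x.1 K) i ∧ g (x.1 K) i + 2 ≤ (a i + 1) * q^e) →
      (∀ i, (a i:ℝ)/(q:ℝ)^(d i) ≤ digPoint q hq0 s c ψ Λ x i ∧
        digPoint q hq0 s c ψ Λ x i < ((a i:ℝ)+1)/(q:ℝ)^(d i)) := by
    intro x h i
    obtain ⟨h1, h2⟩ := h i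
    obtain ⟨hs1, hs2⟩ := hS x i
    constructor
    · have hc1 : ((a i * q^e : ℕ):ℝ) ≤ (g (x.1 K) i : ℝ) := by exact_mod_cast h1
      calc (a i:ℝ)/(q:ℝ)^(d i) = ((a i * q^e : ℕ):ℝ)/(q:ℝ)^(DD i) := by
            rw [hpow i]; push_cast
            rw [div_eq_div_iff (by positivity) (by positivity)]; ring
        _ ≤ (g (x.1 K) i : ℝ)/(q:ℝ)^(DD i) := by
            rw [div_le_div_iff_of_pos_right (hqDpos i)]; exact hc1
        _ ≤ _ := hs1
    · have hc2 : (g (x.1 K) i : ℝ) + 1 < (((a i + 1) * q^e : ℕ):ℝ) := by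
        have hn : g (x.1 K) i + 1 < (a i + 1) * q^e := by omega
        exact_mod_cast hn
      calc digPoint q hq0 s c ψ Λ x i ≤ ((g (x.1 K) i : ℝ)+1)/(q:ℝ)^(DD i) := hs2
        _ < (((a i + 1) * q^e : ℕ):ℝ)/(q:ℝ)^(DD i) := by
            rw [div_lt_div_iff_of_pos_right (hqDpos i)]; exact hc2
        _ = ((a i:ℝ)+1)/(q:ℝ)^(d i) := by
            rw [hpow i]; push_cast
            rw [div_eq_div_iff (by positivity) (by positivity)]; ring
  have himp2 : ∀ x : ↥(Zb q),
      (∀ i, (a i:ℝ)/(q:ℝ)^(d i) ≤ digPoint q hq0 s c ψ Λ x i ∧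
        digPoint q hq0 s c ψ Λ x i < ((a i:ℝ)+1)/(q:ℝ)^(d i)) →
      (∀ i, a i * q^e ≤ g (x.1 K) i + 1 ∧ g (x.1 K) i + 1 ≤ (a i + 1) * q^e) := by
    intro x h i
    obtain ⟨h1, h2⟩ := h i
    obtain ⟨hs1, hs2⟩ := hS x i
    have heq1 : ((a i * q^e : ℕ):ℝ)/(q:ℝ)^(DD i) = (a i:ℝ)/(q:ℝ)^(d i) := by
      rw [hpow i]; push_cast
      rw [div_eq_div_iff (by positivity) (by positivity)]; ring
    have heq2 : (((a i + 1) * q^e : ℕ):ℝ)/(q:ℝ)^(DD i) = ((a i:ℝ)+1)/(q:ℝ)^(d i) := by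
      rw [hpow i]; push_cast
      rw [div_eq_div_iff (by positivity) (by positivity)]; ring
    constructor
    · have hA : ((a i * q^e : ℕ):ℝ)/(q:ℝ)^(DD i) ≤ ((g (x.1 K) i : ℝ)+1)/(q:ℝ)^(DD i) := by
        rw [heq1]; exact le_trans h1 hs2
      rw [div_le_div_iff_of_pos_right (hqDpos i)] at hA
      have : ((a i * q^e : ℕ):ℝ) ≤ ((g (x.1 K) i + 1 : ℕ):ℝ) := by push_cast; push_cast at hA; linarith
      exact_mod_cast this
    · have hB : (g (x.1 K) i : ℝ)/(q:ℝ)^(DD i) < (((a i + 1) * q^e : ℕ):ℝ)/(q:ℝ)^(DD i) := by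
        rw [heq2]; exact lt_of_le_of_lt hs1 h2
      rw [div_lt_div_iff_of_pos_right (hqDpos i)] at hB
      have : g (x.1 K) i < (a i + 1) * q^e := by exact_mod_cast hB
      omega
  -- counting limits
  have htLsn := count_pred q hq1 sn hsn K hK1
    (fun ρ => ∀ i, a i * q^e ≤ g ρ i ∧ g ρ i + 2 ≤ (a i + 1) * q^e)
  have htHsn := count_pred q hq1 sn hsn K hK1
    (fun ρ => ∀ i, a i * q^e ≤ g ρ i + 1 ∧ g ρ i + 1 ≤ (a i + 1) * q^e)
  have htLnat := count_pred q hq1 (natToZb q) (udzb_nat q hq1) K hK1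
    (fun ρ => ∀ i, a i * q^e ≤ g ρ i ∧ g ρ i + 2 ≤ (a i + 1) * q^e)
  have htHnat := count_pred q hq1 (natToZb q) (udzb_nat q hq1) K hK1
    (fun ρ => ∀ i, a i * q^e ≤ g ρ i + 1 ∧ g ρ i + 1 ≤ (a i + 1) * q^e)
  have htEnat := hudnat d a ha
  -- μL ≤ V and V ≤ μH
  have hμLV : ((Finset.univ.filter (fun ρ : ZMod (q^K) =>
        ∀ i, a i * q^e ≤ g ρ i ∧ g ρ i + 2 ≤ (a i + 1) * q^e)).card : ℝ)/(q:ℝ)^K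
      ≤ ∏ i, 1 / (q : ℝ) ^ d i :=
    le_of_tendsto_of_tendsto' htLnat htEnat
      (fun N => count_mono (fun n hn => himp1 (natToZb q n) hn) N)
  have hVμH : (∏ i, 1 / (q : ℝ) ^ d i)
      ≤ ((Finset.univ.filter (fun ρ : ZMod (q^K) =>
        ∀ i, a i * q^e ≤ g ρ i + 1 ∧ g ρ i + 1 ≤ (a i + 1) * q^e)).card : ℝ)/(q:ℝ)^K :=
    le_of_tendsto_of_tendsto' htEnat htHnat
      (fun N => count_mono (fun n hn => himp2 (natToZb q n) hn) N)
  have hqKpos : (0:ℝ) < (q:ℝ)^K := by positivity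
  have hqepos : (0:ℝ) < (q:ℝ)^e := by positivity
  -- boundary bound
  have hbdry : ∀ (i : Fin s) (v : ℕ), v ≤ q^(DD i) →
      ((Finset.univ.filter (fun ρ : ZMod (q^K) => g ρ i + 1 = v)).card : ℝ)/(q:ℝ)^K
        ≤ 2/(q:ℝ)^(DD i) := by
    intro i v hv
    rcases Nat.eq_zero_or_pos v with rfl | hv1
    · have hemp : (Finset.univ.filter (fun ρ : ZMod (q^K) => g ρ i + 1 = 0)) = ∅ :=
        Finset.filter_false_of_mem (fun ρ _ => by omega)
      rw [hemp]
      simp only [Finset.card_empty, Nat.cast_zero, zero_div]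
      positivity
    obtain ⟨w, rfl⟩ : ∃ w, v = w + 1 := ⟨v - 1, by omega⟩
    have htB := count_pred q hq1 (natToZb q) (udzb_nat q hq1) K hK1
      (fun ρ => g ρ i + 1 = w + 1)
    have hfull := hudnat (fun _ => 0) (fun _ => 0) (fun i' => by simp)
    have hE1 := hudnat (fun i' => if i' = i then DD i else 0)
      (fun i' => if i' = i then w else 0)
      (fun i' => by
        show (if i' = i then w else 0) < q ^ (if i' = i then DD i else 0)
        by_cases h : i' = i
        · subst h; rw [if_pos rfl, if_pos rfl]; omega
        · rw [if_neg h, if_neg h]; simp)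
    have hP1 : (∏ i' : Fin s, 1/(q:ℝ)^(if i' = i then DD i else 0)) = 1/(q:ℝ)^(DD i) := by
      rw [Finset.prod_eq_single i]
      · simp
      · intro b _ hb; simp [hb]
      · intro hni; exact absurd (Finset.mem_univ i) hni
    have hP3 : (∏ _i' : Fin s, 1/(q:ℝ)^(0:ℕ)) = 1 := by simp
    have hsand := fun n : ℕ => hS (natToZb q n) i
    rcases lt_or_eq_of_le hv with hlt | heqQ
    · -- w + 1 < q ^ DD i : use both neighbouring intervals
      have hE2 := hudnat (fun i' => if i' = i then DD i else 0)
        (fun i' => if i' = i then w + 1 else 0)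
        (fun i' => by
          show (if i' = i then w + 1 else 0) < q ^ (if i' = i then DD i else 0)
          by_cases h : i' = i
          · subst h; rw [if_pos rfl, if_pos rfl]; omega
          · rw [if_neg h, if_neg h]; simp)
      have hincl : ∀ n : ℕ, (g ((natToZb q n).1 K) i + 1 = w + 1) →
          (∀ i', ((if i' = i then w else 0 : ℕ) : ℝ) / (q:ℝ) ^ (if i' = i then DD i else 0)
              ≤ digPoint q hq0 s c ψ Λ (natToZb q n) i'
            ∧ digPoint q hq0 s c ψ Λ (natToZb q n) i'
              < (((if i' = i then w else 0 : ℕ) : ℝ) + 1) / (q:ℝ) ^ (if i' = i then DD i else 0))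
          ∨ (∀ i', ((if i' = i then w + 1 else 0 : ℕ) : ℝ) / (q:ℝ) ^ (if i' = i then DD i else 0)
              ≤ digPoint q hq0 s c ψ Λ (natToZb q n) i'
            ∧ digPoint q hq0 s c ψ Λ (natToZb q n) i'
              < (((if i' = i then w + 1 else 0 : ℕ) : ℝ) + 1) / (q:ℝ) ^ (if i' = i then DD i else 0))
          ∨ ¬(∀ i', ((0:ℕ) : ℝ) / (q:ℝ) ^ (0:ℕ) ≤ digPoint q hq0 s c ψ Λ (natToZb q n) i'
            ∧ digPoint q hq0 s c ψ Λ (natToZb q n) i'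
              < (((0:ℕ) : ℝ) + 1) / (q:ℝ) ^ (0:ℕ)) := by
        intro n hgn
        have hw : g ((natToZb q n).1 K) i = w := by omega
        by_cases hF : ∀ i', ((0:ℕ) : ℝ) / (q:ℝ) ^ (0:ℕ) ≤ digPoint q hq0 s c ψ Λ (natToZb q n) i'
            ∧ digPoint q hq0 s c ψ Λ (natToZb q n) i' < (((0:ℕ) : ℝ) + 1) / (q:ℝ) ^ (0:ℕ)
        swap
        · exact Or.inr (Or.inr hF)
        have hsl := (hsand n).1
        have hsu := (hsand n).2
        rw [hw] at hsl hsu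
        by_cases hlt2 : digPoint q hq0 s c ψ Λ (natToZb q n) i < ((w:ℝ)+1)/(q:ℝ)^(DD i)
        · left
          intro i'
          by_cases h : i' = i
          · subst h; simp only [if_pos rfl]
            exact ⟨hsl, hlt2⟩
          · simp only [if_neg h]
            have := hF i'
            simpa using this
        · right; left
          have hpteq : digPoint q hq0 s c ψ Λ (natToZb q n) i = ((w:ℝ)+1)/(q:ℝ)^(DD i) :=
            le_antisymm hsu (not_lt.mp hlt2)
          intro i'
          by_cases h : i' = i
          · subst h; rw [if_pos rfl, if_pos rfl]
            constructor
            · rw [hpteq]; push_cast; exact le_refl _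
            · rw [hpteq, div_lt_div_iff_of_pos_right (hqDpos _)]; push_cast; linarith
          · simp only [if_neg h]
            have := hF i'
            simpa using this
      have hcomb := (hE1.add hE2).add (tendsto_const_nhds (x := (1:ℝ)).sub hfull)
      have hμB := le_of_tendsto_of_tendsto' htB hcomb (fun N => count_split hincl N)
      beta_reduce at hμB
      rw [hP1, hP3] at hμB
      have h2x : (2:ℝ)/(q:ℝ)^(DD i) = 1/(q:ℝ)^(DD i) + 1/(q:ℝ)^(DD i) := by ring
      linarith [hμB, h2x]
    · -- w + 1 = q ^ DD i : the upper neighbour is impossible within [0,1)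
      have hincl : ∀ n : ℕ, (g ((natToZb q n).1 K) i + 1 = w + 1) →
          (∀ i', ((if i' = i then w else 0 : ℕ) : ℝ) / (q:ℝ) ^ (if i' = i then DD i else 0)
              ≤ digPoint q hq0 s c ψ Λ (natToZb q n) i'
            ∧ digPoint q hq0 s c ψ Λ (natToZb q n) i'
              < (((if i' = i then w else 0 : ℕ) : ℝ) + 1) / (q:ℝ) ^ (if i' = i then DD i else 0))
          ∨ False
          ∨ ¬(∀ i', ((0:ℕ) : ℝ) / (q:ℝ) ^ (0:ℕ) ≤ digPoint q hq0 s c ψ Λ (natToZb q n) i'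
            ∧ digPoint q hq0 s c ψ Λ (natToZb q n) i'
              < (((0:ℕ) : ℝ) + 1) / (q:ℝ) ^ (0:ℕ)) := by
        intro n hgn
        have hw : g ((natToZb q n).1 K) i = w := by omega
        by_cases hF : ∀ i', ((0:ℕ) : ℝ) / (q:ℝ) ^ (0:ℕ) ≤ digPoint q hq0 s c ψ Λ (natToZb q n) i'
            ∧ digPoint q hq0 s c ψ Λ (natToZb q n) i' < (((0:ℕ) : ℝ) + 1) / (q:ℝ) ^ (0:ℕ)
        swap
        · exact Or.inr (Or.inr hF)
        have hsl := (hsand n).1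
        have hsu := (hsand n).2
        rw [hw] at hsl hsu
        by_cases hlt2 : digPoint q hq0 s c ψ Λ (natToZb q n) i < ((w:ℝ)+1)/(q:ℝ)^(DD i)
        · left
          intro i'
          by_cases h : i' = i
          · subst h; simp only [if_pos rfl]
            exact ⟨hsl, hlt2⟩
          · simp only [if_neg h]
            have := hF i'
            simpa using this
        · exfalso
          have hpteq : digPoint q hq0 s c ψ Λ (natToZb q n) i = ((w:ℝ)+1)/(q:ℝ)^(DD i) :=
            le_antisymm hsu (not_lt.mp hlt2)
          have hone : digPoint q hq0 s c ψ Λ (natToZb q n) i = 1 := by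
            rw [hpteq]
            have hcast1 : ((w:ℝ)+1) = (q:ℝ)^(DD i) := by exact_mod_cast heqQ
            rw [hcast1, div_self (ne_of_gt (hqDpos _))]
          have := (hF i).2
          rw [hone] at this
          simp at this
      have hzero : Filter.Tendsto (fun N : ℕ =>
          (((Finset.range N).filter (fun _ : ℕ => False)).card : ℝ)/N) Filter.atTop (nhds 0) := by
        have hz : ∀ N : ℕ, (((Finset.range N).filter (fun _ : ℕ => False)).card : ℝ)/N = 0 := by
          intro N; simp
        exact tendsto_const_nhds.congr (fun N => (hz N).symm)
      have hcomb := (hE1.add hzero).add (tendsto_const_nhds (x := (1:ℝ)).sub hfull)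
      have hμB := le_of_tendsto_of_tendsto' htB hcomb (fun N => count_split hincl N)
      beta_reduce at hμB
      rw [hP1, hP3] at hμB
      have h1q : (0:ℝ) ≤ 1/(q:ℝ)^(DD i) := by positivity
      have h2x : (2:ℝ)/(q:ℝ)^(DD i) = 1/(q:ℝ)^(DD i) + 1/(q:ℝ)^(DD i) := by ring
      linarith [hμB, h2x]
  -- static comparison of the two residue counts
  have hstatN : (Finset.univ.filter (fun ρ : ZMod (q^K) =>
        ∀ i, a i * q^e ≤ g ρ i + 1 ∧ g ρ i + 1 ≤ (a i + 1) * q^e)).card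
      ≤ (Finset.univ.filter (fun ρ : ZMod (q^K) =>
        ∀ i, a i * q^e ≤ g ρ i ∧ g ρ i + 2 ≤ (a i + 1) * q^e)).card
        + ∑ i : Fin s, ((Finset.univ.filter (fun ρ : ZMod (q^K) => g ρ i + 1 = a i * q^e)).card
          + (Finset.univ.filter (fun ρ : ZMod (q^K) => g ρ i + 1 = (a i + 1) * q^e)).card) := by
    have hsub : (Finset.univ.filter (fun ρ : ZMod (q^K) =>
          ∀ i, a i * q^e ≤ g ρ i + 1 ∧ g ρ i + 1 ≤ (a i + 1) * q^e))
        ⊆ (Finset.univ.filter (fun ρ : ZMod (q^K) =>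
            ∀ i, a i * q^e ≤ g ρ i ∧ g ρ i + 2 ≤ (a i + 1) * q^e))
          ∪ Finset.univ.biUnion (fun i : Fin s =>
              (Finset.univ.filter (fun ρ : ZMod (q^K) => g ρ i + 1 = a i * q^e))
              ∪ (Finset.univ.filter (fun ρ : ZMod (q^K) => g ρ i + 1 = (a i + 1) * q^e))) := by
      intro ρ hρ
      simp only [Finset.mem_filter, Finset.mem_univ, true_and, Finset.mem_union,
        Finset.mem_biUnion] at *
      by_cases hPL : ∀ i, a i * q^e ≤ g ρ i ∧ g ρ i + 2 ≤ (a i + 1) * q^e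
      · exact Or.inl hPL
      · right
        push_neg at hPL
        obtain ⟨i, hi⟩ := hPL
        have := hρ i
        exact ⟨i, by omega⟩
    have h1 := Finset.card_le_card hsub
    have h2 := Finset.card_union_le (Finset.univ.filter (fun ρ : ZMod (q^K) =>
        ∀ i, a i * q^e ≤ g ρ i ∧ g ρ i + 2 ≤ (a i + 1) * q^e))
      (Finset.univ.biUnion (fun i : Fin s =>
        (Finset.univ.filter (fun ρ : ZMod (q^K) => g ρ i + 1 = a i * q^e))
        ∪ (Finset.univ.filter (fun ρ : ZMod (q^K) => g ρ i + 1 = (a i + 1) * q^e))))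
    have h3 := Finset.card_biUnion_le (s := (Finset.univ : Finset (Fin s)))
      (t := fun i : Fin s =>
        (Finset.univ.filter (fun ρ : ZMod (q^K) => g ρ i + 1 = a i * q^e))
        ∪ (Finset.univ.filter (fun ρ : ZMod (q^K) => g ρ i + 1 = (a i + 1) * q^e)))
    have h4 : ∑ i : Fin s, ((Finset.univ.filter (fun ρ : ZMod (q^K) => g ρ i + 1 = a i * q^e))
          ∪ (Finset.univ.filter (fun ρ : ZMod (q^K) => g ρ i + 1 = (a i + 1) * q^e))).card
        ≤ ∑ i : Fin s, ((Finset.univ.filter (fun ρ : ZMod (q^K) => g ρ i + 1 = a i * q^e)).card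
          + (Finset.univ.filter (fun ρ : ZMod (q^K) => g ρ i + 1 = (a i + 1) * q^e)).card) :=
      Finset.sum_le_sum (fun i _ => Finset.card_union_le _ _)
    omega
  -- gap between μH and μL
  have hμHL : ((Finset.univ.filter (fun ρ : ZMod (q^K) =>
        ∀ i, a i * q^e ≤ g ρ i + 1 ∧ g ρ i + 1 ≤ (a i + 1) * q^e)).card : ℝ)/(q:ℝ)^K
      ≤ ((Finset.univ.filter (fun ρ : ZMod (q^K) =>
        ∀ i, a i * q^e ≤ g ρ i ∧ g ρ i + 2 ≤ (a i + 1) * q^e)).card : ℝ)/(q:ℝ)^K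
        + 4*(s:ℝ)/(q:ℝ)^e := by
    have hsum : (∑ i : Fin s,
        (((Finset.univ.filter (fun ρ : ZMod (q^K) => g ρ i + 1 = a i * q^e)).card : ℝ)/(q:ℝ)^K
          + ((Finset.univ.filter (fun ρ : ZMod (q^K) => g ρ i + 1 = (a i + 1) * q^e)).card : ℝ)/(q:ℝ)^K))
        ≤ ∑ _i : Fin s, (4:ℝ)/(q:ℝ)^e := by
      refine Finset.sum_le_sum (fun i _ => ?_)
      have hb1 := hbdry i (a i * q^e) (by
        simp only [hDD]; rw [pow_add]
        exact Nat.mul_le_mul_right _ (le_of_lt (ha i)))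
      have hb2 := hbdry i ((a i + 1) * q^e) (by
        simp only [hDD]; rw [pow_add]
        exact Nat.mul_le_mul_right _ (ha i))
      have h7 : (2:ℝ)/(q:ℝ)^(DD i) ≤ 2/(q:ℝ)^e := by
        have h8 : (q:ℝ)^e ≤ (q:ℝ)^(DD i) := pow_le_pow_right₀ hq1R.le (by simp only [hDD]; omega)
        have h9 := one_div_le_one_div_of_le hqepos h8
        calc (2:ℝ)/(q:ℝ)^(DD i) = 2*(1/(q:ℝ)^(DD i)) := by ring
          _ ≤ 2*(1/(q:ℝ)^e) := by linarith
          _ = 2/(q:ℝ)^e := by ring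
      have h10 : (4:ℝ)/(q:ℝ)^e = 2/(q:ℝ)^e + 2/(q:ℝ)^e := by ring
      linarith
    have hsum2 : (∑ _i : Fin s, (4:ℝ)/(q:ℝ)^e) = 4*(s:ℝ)/(q:ℝ)^e := by
      rw [Finset.sum_const, Finset.card_univ, Fintype.card_fin, nsmul_eq_mul]
      ring
    have hcastStat : ((Finset.univ.filter (fun ρ : ZMod (q^K) =>
          ∀ i, a i * q^e ≤ g ρ i + 1 ∧ g ρ i + 1 ≤ (a i + 1) * q^e)).card : ℝ)/(q:ℝ)^K
        ≤ ((Finset.univ.filter (fun ρ : ZMod (q^K) =>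
          ∀ i, a i * q^e ≤ g ρ i ∧ g ρ i + 2 ≤ (a i + 1) * q^e)).card : ℝ)/(q:ℝ)^K
          + ∑ i : Fin s,
            (((Finset.univ.filter (fun ρ : ZMod (q^K) => g ρ i + 1 = a i * q^e)).card : ℝ)/(q:ℝ)^K
            + ((Finset.univ.filter (fun ρ : ZMod (q^K) => g ρ i + 1 = (a i + 1) * q^e)).card : ℝ)/(q:ℝ)^K) := by
      have hr : ((Finset.univ.filter (fun ρ : ZMod (q^K) =>
          ∀ i, a i * q^e ≤ g ρ i + 1 ∧ g ρ i + 1 ≤ (a i + 1) * q^e)).card : ℝ)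
        ≤ ((Finset.univ.filter (fun ρ : ZMod (q^K) =>
          ∀ i, a i * q^e ≤ g ρ i ∧ g ρ i + 2 ≤ (a i + 1) * q^e)).card : ℝ)
          + ∑ i : Fin s,
            (((Finset.univ.filter (fun ρ : ZMod (q^K) => g ρ i + 1 = a i * q^e)).card : ℝ)
            + ((Finset.univ.filter (fun ρ : ZMod (q^K) => g ρ i + 1 = (a i + 1) * q^e)).card : ℝ)) := by
        exact_mod_cast hstatN
      calc _ ≤ (((Finset.univ.filter (fun ρ : ZMod (q^K) =>
            ∀ i, a i * q^e ≤ g ρ i ∧ g ρ i + 2 ≤ (a i + 1) * q^e)).card : ℝ)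
            + ∑ i : Fin s,
              (((Finset.univ.filter (fun ρ : ZMod (q^K) => g ρ i + 1 = a i * q^e)).card : ℝ)
              + ((Finset.univ.filter (fun ρ : ZMod (q^K) => g ρ i + 1 = (a i + 1) * q^e)).card : ℝ)))/(q:ℝ)^K := by
            rw [div_le_div_iff_of_pos_right hqKpos]; exact hr
        _ = _ := by rw [add_div, Finset.sum_div]; congr 1; exact Finset.sum_congr rfl (fun i _ => by rw [add_div])
    calc _ ≤ _ := hcastStat
      _ ≤ _ := by
        have := hsum.trans (le_of_eq hsum2)
        linarith
  -- conclude
  have hev1 := htLsn.eventually (eventually_gt_nhds (show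
    ((Finset.univ.filter (fun ρ : ZMod (q^K) =>
      ∀ i, a i * q^e ≤ g ρ i ∧ g ρ i + 2 ≤ (a i + 1) * q^e)).card : ℝ)/(q:ℝ)^K - ε/2
    < ((Finset.univ.filter (fun ρ : ZMod (q^K) =>
      ∀ i, a i * q^e ≤ g ρ i ∧ g ρ i + 2 ≤ (a i + 1) * q^e)).card : ℝ)/(q:ℝ)^K by linarith))
  have hev2 := htHsn.eventually (eventually_lt_nhds (show
    ((Finset.univ.filter (fun ρ : ZMod (q^K) =>
      ∀ i, a i * q^e ≤ g ρ i + 1 ∧ g ρ i + 1 ≤ (a i + 1) * q^e)).card : ℝ)/(q:ℝ)^K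
    < ((Finset.univ.filter (fun ρ : ZMod (q^K) =>
      ∀ i, a i * q^e ≤ g ρ i + 1 ∧ g ρ i + 1 ≤ (a i + 1) * q^e)).card : ℝ)/(q:ℝ)^K + ε/2 by linarith))
  filter_upwards [hev1, hev2] with N h1 h2
  have hA1 := count_mono (fun n hn => himp1 (sn n) hn) N
  have hA2 := count_mono (fun n hn => himp2 (sn n) hn) N
  rw [Real.dist_eq, abs_sub_lt_iff]
  constructor
  · linarith
  · linarith
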